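/- Let X and Y be Polish spaces equipped with their Borel σ-algebras, let μ and ν be Borel probability measures on X, and let f, g : X → Y be Borel measurable maps. Then for every coupling γ' of f#μ and g#ν there exists a coupling γ of μ and ν such that the pushforward of γ under the map (x₁,x₂) ↦ (f(x₁), g(x₂)) equals γ'. Consequently, the set of couplings of f#μ and g#ν is exactly the image of the set of couplings of μ and ν under pushforward by (f × g). -/

import Mathlib

open MeasureTheory

/-- The set of couplings of two measures: measures on the product whose marginals
are the given measures. -/
def couplings {X Y : Type*} [MeasurableSpace X] [MeasurableSpace Y]
    (μ : Measure X) (ν : Measure Y) : Set (Measure (X × Y)) :=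
  {γ | γ.map Prod.fst = μ ∧ γ.map Prod.snd = ν}

open ProbabilityTheory

/-- The conditional kernel of `μ.map (fun a => (f a, a))` pushed forward by `f` is a.e. the
Dirac kernel. -/
lemma condKernel_map_self_ae_dirac
    {X Y : Type*} [MeasurableSpace X] [StandardBorelSpace X] [Nonempty X]
    [MeasurableSpace Y] [StandardBorelSpace Y] [Nonempty Y]
    (μ : Measure X) [IsFiniteMeasure μ] (f : X → Y) (hf : Measurable f) :
    ∀ᵐ y ∂(μ.map f),
      ((μ.map (fun a => (f a, a))).condKernel y).map f = Measure.dirac y := by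
  set ρ : Measure (Y × X) := μ.map (fun a => (f a, a)) with hρ
  have hmpair : Measurable fun a : X => (f a, a) := hf.prodMk measurable_id
  have hρ_fst : ρ.fst = μ.map f := Measure.fst_map_prodMk measurable_id
  set τ : Measure (Y × Y) := μ.map (fun a => (f a, f a)) with hτ
  have hmpair2 : Measurable fun a : X => (f a, f a) := hf.prodMk hf
  have hτ_fst : τ.fst = μ.map f := Measure.fst_map_prodMk hf
  have hmF : Measurable fun p : Y × X => (p.1, f p.2) :=
    measurable_fst.prodMk (hf.comp measurable_snd)
  have hA : τ = τ.fst ⊗ₘ Kernel.deterministic id measurable_id := by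
    ext s hs
    have hD : MeasurableSet ((fun y : Y => (y, y)) ⁻¹' s) :=
      (measurable_id.prodMk measurable_id) hs
    rw [Measure.compProd_apply hs, hτ_fst]
    have hdet : ∀ y : Y, (Kernel.deterministic id measurable_id : Kernel Y Y) y
        = Measure.dirac y := fun y => rfl
    have h1 : ∀ y : Y, ((Kernel.deterministic id measurable_id : Kernel Y Y)) y (Prod.mk y ⁻¹' s)
        = ((fun y : Y => (y, y)) ⁻¹' s).indicator 1 y := by
      intro y
      rw [hdet y, Measure.dirac_apply' _ (measurable_prodMk_left hs)]
      rfl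
    simp_rw [h1]
    rw [lintegral_indicator_one hD, hτ, Measure.map_apply hmpair2 hs,
      Measure.map_apply hf hD]
    rfl
  have hB : τ = τ.fst ⊗ₘ (Kernel.map ρ.condKernel f) := by
    have hcomp : τ = ρ.map (fun p : Y × X => (p.1, f p.2)) := by
      rw [hρ, Measure.map_map hmF hmpair]
      rfl
    ext s hs
    have hL : τ s = ∫⁻ y, ρ.condKernel y (f ⁻¹' (Prod.mk y ⁻¹' s)) ∂(μ.map f) := by
      rw [hcomp, Measure.map_apply hmF hs]
      conv_lhs => rw [← Measure.disintegrate ρ ρ.condKernel]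
      rw [Measure.compProd_apply (hmF hs), hρ_fst]
      rfl
    rw [Measure.compProd_apply hs, hτ_fst, hL]
    refine lintegral_congr fun y => ?_
    rw [Kernel.map_apply' _ hf _ (measurable_prodMk_left hs)]
  haveI : IsMarkovKernel (Kernel.map ρ.condKernel f) := Kernel.IsMarkovKernel.map _ hf
  have h1 := eq_condKernel_of_measure_eq_compProd (ρ := τ) (Kernel.map ρ.condKernel f) hB
  have h2 := eq_condKernel_of_measure_eq_compProd (ρ := τ)
    (Kernel.deterministic id measurable_id) hA
  rw [hτ_fst] at h1 h2
  filter_upwards [h1, h2] with y hy1 hy2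
  rw [← Kernel.map_apply _ hf, hy1, ← hy2, Kernel.deterministic_apply measurable_id, id]

/-- On Polish spaces, every coupling `γ'` of the pushforwards `f#μ` and `g#ν` arises as
the pushforward of some coupling `γ` of `μ` and `ν` under `(x₁,x₂) ↦ (f x₁, g x₂)`;
consequently the set of couplings of `f#μ` and `g#ν` is exactly the image of the set
of couplings of `μ` and `ν` under this pushforward. -/
theorem couplings_pushforward_surjective
    {X Y : Type*}
    [TopologicalSpace X] [PolishSpace X] [MeasurableSpace X] [BorelSpace X]
    [TopologicalSpace Y] [PolishSpace Y] [MeasurableSpace Y] [BorelSpace Y]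
    (μ ν : Measure X) [IsProbabilityMeasure μ] [IsProbabilityMeasure ν]
    (f g : X → Y) (hf : Measurable f) (hg : Measurable g) :
    (∀ γ' ∈ couplings (μ.map f) (ν.map g),
        ∃ γ ∈ couplings μ ν, γ.map (fun p : X × X => (f p.1, g p.2)) = γ') ∧
    couplings (μ.map f) (ν.map g)
      = (fun γ : Measure (X × X) => γ.map (fun p : X × X => (f p.1, g p.2))) ''
          couplings μ ν := by
  have hX : Nonempty X := by
    by_contra h
    rw [not_nonempty_iff] at h
    have h1 : μ Set.univ = 1 := measure_univ
    rw [Set.univ_eq_empty_iff.2 h, measure_empty] at h1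
    exact zero_ne_one h1
  have hY : Nonempty Y := hX.map f
  have hFm : Measurable fun p : X × X => (f p.1, g p.2) :=
    (hf.comp measurable_fst).prodMk (hg.comp measurable_snd)
  have hmpairf : Measurable fun a : X => (f a, a) := hf.prodMk measurable_id
  have hmpairg : Measurable fun a : X => (g a, a) := hg.prodMk measurable_id
  set ρ : Measure (Y × X) := μ.map (fun a => (f a, a)) with hρ
  set σ : Measure (Y × X) := ν.map (fun a => (g a, a)) with hσ
  have hρ_fst : ρ.fst = μ.map f := Measure.fst_map_prodMk measurable_id
  have hσ_fst : σ.fst = ν.map g := Measure.fst_map_prodMk measurable_id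
  set κ : Kernel Y X := ρ.condKernel with hκ
  set η : Kernel Y X := σ.condKernel with hη
  set K : Kernel (Y × Y) (X × X) :=
    (κ.comap Prod.fst measurable_fst) ×ₖ (η.comap Prod.snd measurable_snd) with hK
  have hK_apply : ∀ q : Y × Y, K q = (κ q.1).prod (η q.2) := by
    intro q
    rw [hK, Kernel.prod_apply, Kernel.comap_apply, Kernel.comap_apply]
  have main : ∀ γ' ∈ couplings (μ.map f) (ν.map g),
      ∃ γ ∈ couplings μ ν, γ.map (fun p : X × X => (f p.1, g p.2)) = γ' := by
    rintro γ' ⟨hγ1, hγ2⟩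
    refine ⟨γ'.bind K, ⟨?_, ?_⟩, ?_⟩
    · -- first marginal
      ext s hs
      rw [Measure.map_apply measurable_fst hs,
        Measure.bind_apply (measurable_fst hs) (Kernel.measurable K).aemeasurable]
      have h1 : ∀ q : Y × Y, K q (Prod.fst ⁻¹' s) = κ q.1 s := by
        intro q
        have hss : Prod.fst ⁻¹' s = s ×ˢ (Set.univ : Set X) := by ext p; simp
        rw [hK_apply q, hss, Measure.prod_prod, measure_univ, mul_one]
      simp_rw [h1]
      rw [← lintegral_map (κ.measurable_coe hs) measurable_fst, hγ1]
      have h2 : ∫⁻ y, κ y s ∂(μ.map f) = (ρ.fst ⊗ₘ κ) (Set.univ ×ˢ s) := by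
        rw [Measure.compProd_apply_prod MeasurableSet.univ hs, setLIntegral_univ, hρ_fst]
      rw [h2, Measure.disintegrate ρ κ, hρ,
        Measure.map_apply hmpairf (MeasurableSet.univ.prod hs)]
      congr 1
      ext a
      simp
    · -- second marginal
      ext s hs
      rw [Measure.map_apply measurable_snd hs,
        Measure.bind_apply (measurable_snd hs) (Kernel.measurable K).aemeasurable]
      have h1 : ∀ q : Y × Y, K q (Prod.snd ⁻¹' s) = η q.2 s := by
        intro q
        have hss : Prod.snd ⁻¹' s = (Set.univ : Set X) ×ˢ s := by ext p; simp
        rw [hK_apply q, hss, Measure.prod_prod, measure_univ, one_mul]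
      simp_rw [h1]
      rw [← lintegral_map (η.measurable_coe hs) measurable_snd, hγ2]
      have h2 : ∫⁻ y, η y s ∂(ν.map g) = (σ.fst ⊗ₘ η) (Set.univ ×ˢ s) := by
        rw [Measure.compProd_apply_prod MeasurableSet.univ hs, setLIntegral_univ, hσ_fst]
      rw [h2, Measure.disintegrate σ η, hσ,
        Measure.map_apply hmpairg (MeasurableSet.univ.prod hs)]
      congr 1
      ext a
      simp
    · -- pushforward
      have hd1 : ∀ᵐ q ∂γ', (κ q.1).map f = Measure.dirac q.1 := by
        have h := condKernel_map_self_ae_dirac μ f hf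
        rw [← hγ1] at h
        exact ae_of_ae_map measurable_fst.aemeasurable h
      have hd2 : ∀ᵐ q ∂γ', (η q.2).map g = Measure.dirac q.2 := by
        have h := condKernel_map_self_ae_dirac ν g hg
        rw [← hγ2] at h
        exact ae_of_ae_map measurable_snd.aemeasurable h
      ext s hs
      rw [Measure.map_apply hFm hs, Measure.bind_apply (hFm hs) (Kernel.measurable K).aemeasurable]
      have hae : ∀ᵐ q ∂γ', K q ((fun p : X × X => (f p.1, g p.2)) ⁻¹' s)
          = s.indicator 1 q := by
        filter_upwards [hd1, hd2] with q h1 h2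
        have hPm : (fun p : X × X => (f p.1, g p.2)) = Prod.map f g := rfl
        rw [hK_apply q, hPm, ← Measure.map_apply (hf.prodMap hg) hs,
          ← Measure.map_prod_map _ _ hf hg, h1, h2, Measure.dirac_prod_dirac]
        rw [Measure.dirac_apply' _ hs]
      rw [lintegral_congr_ae hae, lintegral_indicator_one hs]
  refine ⟨main, Set.Subset.antisymm (fun γ' hγ' => ?_) ?_⟩
  · obtain ⟨γ, hγ, hmap⟩ := main γ' hγ'
    exact ⟨γ, hγ, hmap⟩
  · rintro _ ⟨γ, ⟨h1, h2⟩, rfl⟩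
    constructor
    · rw [Measure.map_map measurable_fst hFm]
      have : (Prod.fst ∘ fun p : X × X => (f p.1, g p.2)) = f ∘ Prod.fst := rfl
      rw [this, ← Measure.map_map hf measurable_fst, h1]
    · rw [Measure.map_map measurable_snd hFm]
      have : (Prod.snd ∘ fun p : X × X => (f p.1, g p.2)) = g ∘ Prod.snd := rfl
      rw [this, ← Measure.map_map hg measurable_snd, h2]
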